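/- In the normalized-basis setting of the model 𝒰_{2,s}: the kernel space Y := {η ∈ ℝ^{3s} : A(ζ₁,ζ₂,ζ₃,η) = 0 for all ζ₁,ζ₂,ζ₃} equals Span{v_1,...,v_s}, and its g-orthogonal complement Y^⊥ equals Span{t_1,...,t_s,v_1,...,v_s}. -/

import Mathlib

/-- `ℝ^{3s}` with coordinates `(u, t, v)`: for `a : V2 s`, `a.1` are the `u`-coordinates,
`a.2.1` the `t`-coordinates and `a.2.2` the `v`-coordinates. -/
abbrev V2 (s : ℕ) := (Fin s → ℝ) × (Fin s → ℝ) × (Fin s → ℝ)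

/-- The Euclidean dot product on `Fin s → ℝ`. -/
def dotp {s : ℕ} (x y : Fin s → ℝ) : ℝ := ∑ i, x i * y i

/-- The inner product of `𝒰_{2,s}`: `g(u_i,v_j) = δ_{ij}`, `g(t_i,t_j) = -δ_{ij}`. -/
def g2 {s : ℕ} (a b : V2 s) : ℝ := dotp a.1 b.2.2 + dotp a.2.2 b.1 - dotp a.2.1 b.2.1

/-- The multilinear extension (respecting the curvature symmetries) of the algebraic curvature
tensor whose only nonzero components up to the `ℤ₂` symmetries are
`A(u_i,u_j,u_k,t_l) = δ_{il}δ_{jk} - δ_{ik}δ_{jl}`. -/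
def A2 {s : ℕ} (a b c d : V2 s) : ℝ :=
    (dotp a.1 d.2.1 * dotp b.1 c.1 - dotp a.1 c.1 * dotp b.1 d.2.1)
  - (dotp a.1 c.2.1 * dotp b.1 d.1 - dotp a.1 d.1 * dotp b.1 c.2.1)
  + (dotp c.1 b.2.1 * dotp d.1 a.1 - dotp c.1 a.1 * dotp d.1 b.2.1)
  - (dotp c.1 a.2.1 * dotp d.1 b.1 - dotp c.1 b.1 * dotp d.1 a.2.1)

lemma dotp_zero_left {s : ℕ} (x : Fin s → ℝ) : dotp 0 x = 0 := by simp [dotp]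

lemma dotp_zero_right {s : ℕ} (x : Fin s → ℝ) : dotp x 0 = 0 := by simp [dotp]

lemma dotp_single_left {s : ℕ} (i : Fin s) (x : Fin s → ℝ) :
    dotp (Pi.single i 1) x = x i := by
  simp [dotp, Pi.single_apply]

lemma dotp_single_right {s : ℕ} (i : Fin s) (x : Fin s → ℝ) :
    dotp x (Pi.single i 1) = x i := by
  simp [dotp, Pi.single_apply]

/-- Characterization of the kernel space. -/
lemma ker_iff {s : ℕ} (hs : 2 ≤ s) (η : V2 s) :
    (∀ ζ₁ ζ₂ ζ₃ : V2 s, A2 ζ₁ ζ₂ ζ₃ η = 0) ↔ η.1 = 0 ∧ η.2.1 = 0 := by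
  constructor
  · intro h
    have hcard : 1 < Fintype.card (Fin s) := by rw [Fintype.card_fin]; omega
    constructor
    · funext i
      obtain ⟨j, hj⟩ := Fintype.exists_ne_of_one_lt_card hcard i
      have := h (Pi.single i 1, 0, 0) (Pi.single j 1, 0, 0) (0, Pi.single j 1, 0)
      simpa [A2, dotp_zero_left, dotp_zero_right, dotp_single_left, dotp_single_right,
        Pi.single_apply, hj] using this
    · funext i
      obtain ⟨j, hj⟩ := Fintype.exists_ne_of_one_lt_card hcard i
      have := h (Pi.single i 1, 0, 0) (Pi.single j 1, 0, 0) (Pi.single j 1, 0, 0)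
      simpa [A2, dotp_zero_left, dotp_zero_right, dotp_single_left, dotp_single_right,
        Pi.single_apply, hj] using this
  · rintro ⟨h1, h2⟩ ζ₁ ζ₂ ζ₃
    simp [A2, h1, h2, dotp_zero_left, dotp_zero_right]

lemma sum_smul_single {s : ℕ} (w : Fin s → ℝ) :
    ∑ i, w i • (Pi.single i (1 : ℝ) : Fin s → ℝ) = w := by
  have h : ∀ i : Fin s, w i • (Pi.single i (1 : ℝ) : Fin s → ℝ) = Pi.single i (w i) := by
    intro i; rw [← Pi.single_smul, smul_eq_mul, mul_one]
  simp only [h, Finset.univ_sum_single]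

lemma v_mem_span {s : ℕ} (v : Fin s → ℝ) :
    ((0, 0, v) : V2 s) = ∑ i, v i • ((0, 0, Pi.single i 1) : V2 s) := by
  rw [Prod.ext_iff, Prod.ext_iff]
  simp only [Prod.smul_mk, smul_zero, Prod.fst_sum, Prod.snd_sum, Finset.sum_const_zero]
  exact ⟨trivial, trivial, (sum_smul_single v).symm⟩

lemma t_mem_span {s : ℕ} (t : Fin s → ℝ) :
    ((0, t, 0) : V2 s) = ∑ i, t i • ((0, Pi.single i 1, 0) : V2 s) := by
  rw [Prod.ext_iff, Prod.ext_iff]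
  simp only [Prod.smul_mk, smul_zero, Prod.fst_sum, Prod.snd_sum, Finset.sum_const_zero]
  exact ⟨trivial, (sum_smul_single t).symm, trivial⟩

lemma span_v_eq {s : ℕ} :
    (Submodule.span ℝ (Set.range fun i : Fin s => ((0, 0, Pi.single i 1) : V2 s)) :
        Set (V2 s)) = {η : V2 s | η.1 = 0 ∧ η.2.1 = 0} := by
  apply Set.Subset.antisymm
  · intro η hη
    refine Submodule.span_induction ?_ ?_ ?_ ?_ hη
    · rintro x ⟨i, rfl⟩; exact ⟨rfl, rfl⟩
    · exact ⟨rfl, rfl⟩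
    · rintro x y _ _ ⟨hx1, hx2⟩ ⟨hy1, hy2⟩
      exact ⟨by simp [Prod.fst_add, hx1, hy1], by simp [hx2, hy2]⟩
    · rintro c x _ ⟨hx1, hx2⟩
      exact ⟨by simp [hx1], by simp [hx2]⟩
  · rintro ⟨u, t, v⟩ ⟨h1, h2⟩
    have hu : u = 0 := h1
    have ht : t = 0 := h2
    subst hu; subst ht
    rw [v_mem_span v]
    exact Submodule.sum_mem _ fun i _ =>
      Submodule.smul_mem _ _ (Submodule.subset_span ⟨i, rfl⟩)

lemma span_tv_eq {s : ℕ} :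
    (Submodule.span ℝ
        ((Set.range fun i : Fin s => ((0, Pi.single i 1, 0) : V2 s)) ∪
         (Set.range fun i : Fin s => ((0, 0, Pi.single i 1) : V2 s))) : Set (V2 s)) =
      {η : V2 s | η.1 = 0} := by
  apply Set.Subset.antisymm
  · intro η hη
    refine Submodule.span_induction ?_ ?_ ?_ ?_ hη
    · rintro x (⟨i, rfl⟩ | ⟨i, rfl⟩) <;> rfl
    · rfl
    · rintro x y _ _ hx hy
      simp only [Set.mem_setOf_eq] at *
      simp [Prod.fst_add, hx, hy]
    · rintro c x _ hx
      simp only [Set.mem_setOf_eq] at *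
      simp [hx]
  · rintro ⟨u, t, v⟩ h1
    have hu : u = 0 := h1
    subst hu
    have hsplit : ((0, t, v) : V2 s) = ((0, t, 0) : V2 s) + ((0, 0, v) : V2 s) := by
      rw [Prod.ext_iff, Prod.ext_iff]; exact ⟨by simp, by simp, by simp⟩
    rw [hsplit, t_mem_span t, v_mem_span v]
    refine Submodule.add_mem _ ?_ ?_ <;>
      refine Submodule.sum_mem _ fun i _ => Submodule.smul_mem _ _ (Submodule.subset_span ?_)
    · exact Or.inl ⟨i, rfl⟩
    · exact Or.inr ⟨i, rfl⟩

/-- The kernel space `Y = {η : A(·,·,·,η) = 0}` equals `Span{v_1,...,v_s}` and its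
`g`-orthogonal complement equals `Span{t_1,...,t_s,v_1,...,v_s}`. -/
theorem stmt18 (s : ℕ) (hs : 2 ≤ s) :
    {η : V2 s | ∀ ζ₁ ζ₂ ζ₃ : V2 s, A2 ζ₁ ζ₂ ζ₃ η = 0}
      = (Submodule.span ℝ (Set.range fun i : Fin s => ((0, 0, Pi.single i 1) : V2 s)) :
          Set (V2 s)) ∧
    {η : V2 s | ∀ ζ : V2 s, (∀ ζ₁ ζ₂ ζ₃ : V2 s, A2 ζ₁ ζ₂ ζ₃ ζ = 0) → g2 η ζ = 0}
      = (Submodule.span ℝ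
          ((Set.range fun i : Fin s => ((0, Pi.single i 1, 0) : V2 s)) ∪
           (Set.range fun i : Fin s => ((0, 0, Pi.single i 1) : V2 s))) : Set (V2 s)) := by
  constructor
  · rw [span_v_eq]
    ext η
    exact ker_iff hs η
  · rw [span_tv_eq]
    ext η
    simp only [Set.mem_setOf_eq]
    constructor
    · intro h
      funext i
      have hker : ∀ ζ₁ ζ₂ ζ₃ : V2 s, A2 ζ₁ ζ₂ ζ₃ ((0, 0, Pi.single i 1) : V2 s) = 0 :=
        (ker_iff hs _).mpr ⟨rfl, rfl⟩
      have := h ((0, 0, Pi.single i 1) : V2 s) hker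
      simpa [g2, dotp_zero_left, dotp_zero_right, dotp_single_right] using this
    · intro h1 ζ hζ
      obtain ⟨hz1, hz2⟩ := (ker_iff hs ζ).mp hζ
      simp [g2, h1, hz1, hz2, dotp_zero_left, dotp_zero_right]
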